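/- For a finite set G of measurable functions on X, all bounded in absolute value by Γ, for i.i.d. random variables Y_0,…,Y_m with law Q, and real weights p_0,…,p_m, there is a universal constant C (one may take C = 24) such that E[max_{g∈G} |∑_{i=0}^m p_i (g(Y_i) − Q(g))|] ≤ C·(√(∑ p_i²)·Δ·√(log(1+|G|)) + max_i |p_i|·Γ·log(1+|G|)), where Δ² = max_{g∈G} Q(g²). -/

import Mathlib

set_option maxHeartbeats 1600000
open MeasureTheory ProbabilityTheory Finset

lemma exp_le_quadratic {x : ℝ} (hx : |x| ≤ 1) : Real.exp x ≤ 1 + x + (3/4) * x ^ 2 := by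
  have h := Real.exp_bound hx (by norm_num : 0 < 2)
  have hs : ∑ m ∈ Finset.range 2, x ^ m / (m.factorial : ℝ) = 1 + x := by
    simp [Finset.sum_range_succ]
  rw [hs] at h
  have h3 := (abs_le.mp h).2
  norm_num [Nat.factorial] at h3
  nlinarith [sq_abs x]

lemma integral_exp_le {X : Type*} [MeasurableSpace X] (Q : Measure X) [IsProbabilityMeasure Q]
    (f : X → ℝ) (hf : Measurable f) (hb : ∀ x, |f x| ≤ 1)
    (hmean : ∫ x, f x ∂Q = 0) :
    ∫ x, Real.exp (f x) ∂Q ≤ Real.exp ((3/4) * ∫ x, (f x)^2 ∂Q) := by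
  have hint1 : Integrable f Q :=
    Integrable.mono' (integrable_const 1) hf.aestronglyMeasurable
      (ae_of_all _ fun x => by simpa using hb x)
  have hint2 : Integrable (fun x => (f x)^2) Q :=
    Integrable.mono' (integrable_const 1) ((hf.pow_const 2).aestronglyMeasurable)
      (ae_of_all _ fun x => by
        have := hb x
        rw [Real.norm_eq_abs, abs_pow]
        nlinarith [abs_nonneg (f x)])
  have hintexp : Integrable (fun x => Real.exp (f x)) Q :=
    Integrable.mono' (integrable_const (Real.exp 1)) hf.exp.aestronglyMeasurable
      (ae_of_all _ fun x => by
        rw [Real.norm_eq_abs, abs_of_pos (Real.exp_pos _)]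
        exact Real.exp_le_exp.mpr ((le_abs_self _).trans (hb x)))
  have step1 : ∫ x, Real.exp (f x) ∂Q ≤ ∫ x, (1 + f x + (3/4) * (f x)^2) ∂Q := by
    refine integral_mono hintexp ?_ fun x => exp_le_quadratic (hb x)
    exact ((integrable_const 1).add hint1).add (hint2.const_mul _)
  have step2 : ∫ x, (1 + f x + (3/4) * (f x)^2) ∂Q = 1 + (3/4) * ∫ x, (f x)^2 ∂Q := by
    have e1 : ∫ x, ((1 + f x) + (3/4) * (f x)^2) ∂Q
        = (∫ x, (1 + f x) ∂Q) + ∫ x, (3/4) * (f x)^2 ∂Q :=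
      integral_add ((integrable_const 1).add hint1) (hint2.const_mul _)
    have e2 : ∫ x, (1 + f x) ∂Q = (∫ x, (1:ℝ) ∂Q) + ∫ x, f x ∂Q :=
      integral_add (integrable_const 1) hint1
    rw [e1, e2, hmean, integral_const_mul, integral_const]
    simp
  rw [step2] at step1
  exact step1.trans (by linarith [Real.add_one_le_exp ((3/4) * ∫ x, (f x)^2 ∂Q)])

theorem maximal_inequality_finite_class
    {X : Type*} [MeasurableSpace X] (Q : Measure X) [IsProbabilityMeasure Q]
    {Ω : Type*} [MeasurableSpace Ω] (P : Measure Ω) [IsProbabilityMeasure P]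
    {ι : Type*} (G : Finset ι) (hG : G.Nonempty)
    (g : ι → X → ℝ) (hgmeas : ∀ i ∈ G, Measurable (g i))
    (Γ : ℝ) (hΓ : ∀ i ∈ G, ∀ x, |g i x| ≤ Γ)
    (Δ : ℝ) (hΔ : Δ = Real.sqrt (G.sup' hG fun i => ∫ x, (g i x) ^ 2 ∂Q))
    (m : ℕ) (Y : Fin (m + 1) → Ω → X)
    (hYmeas : ∀ k, Measurable (Y k))
    (hYlaw : ∀ k, Measure.map (Y k) P = Q)
    (hYindep : iIndepFun Y P)
    (p : Fin (m + 1) → ℝ) :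
    ∫ ω, G.sup' hG (fun i => |∑ k, p k * (g i (Y k ω) - ∫ x, g i x ∂Q)|) ∂P
      ≤ 24 * (Real.sqrt (∑ k, (p k) ^ 2) * Δ * Real.sqrt (Real.log (1 + G.card))
          + (Finset.univ.sup' ⟨0, mem_univ 0⟩ fun k => |p k|) * Γ * Real.log (1 + G.card)) := by
  classical
  obtain ⟨i₀, hi₀⟩ := id hG
  -- abbreviations
  set M : ℝ := Finset.univ.sup' ⟨0, mem_univ 0⟩ (fun k => |p k|) with hMdef
  set L : ℝ := Real.log (1 + G.card) with hLdef
  set μf : ι → ℝ := fun i => ∫ x, g i x ∂Q with hμfdef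
  set S : ι → Ω → ℝ := fun i ω => ∑ k, p k * (g i (Y k ω) - μf i) with hSdef
  have hgoal : (∫ ω, G.sup' hG (fun i => |∑ k, p k * (g i (Y k ω) - ∫ x, g i x ∂Q)|) ∂P)
      = ∫ ω, G.sup' hG (fun i => |S i ω|) ∂P := rfl
  rw [hgoal]
  -- basic positivity facts
  have hXne : Nonempty X := by
    by_contra h
    rw [not_nonempty_iff] at h
    have h1 : Q Set.univ = 1 := measure_univ
    rw [Set.univ_eq_empty_iff.mpr h, measure_empty] at h1
    exact zero_ne_one h1
  obtain ⟨x₀⟩ := hXne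
  have hΓ0 : 0 ≤ Γ := (abs_nonneg _).trans (hΓ i₀ hi₀ x₀)
  have hM : ∀ k, |p k| ≤ M := by
    intro k; rw [hMdef]; exact Finset.le_sup' (fun k => |p k|) (mem_univ k)
  have hM0 : 0 ≤ M := (abs_nonneg _).trans (hM 0)
  have hn1 : (1:ℝ) ≤ G.card := by exact_mod_cast Finset.card_pos.mpr hG
  have hL2 : Real.log 2 ≤ L := by
    rw [hLdef]; exact Real.log_le_log (by norm_num) (by linarith)
  have hLpos : 0 < L := lt_of_lt_of_le (Real.log_pos (by norm_num)) hL2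
  have hΔ0 : 0 ≤ Δ := hΔ ▸ Real.sqrt_nonneg _
  have hD2nonneg : 0 ≤ G.sup' hG fun i => ∫ x, (g i x) ^ 2 ∂Q :=
    le_trans (integral_nonneg fun x => sq_nonneg (g i₀ x))
      (Finset.le_sup' (fun i => ∫ x, (g i x) ^ 2 ∂Q) hi₀)
  have hΔsq : Δ^2 = G.sup' hG fun i => ∫ x, (g i x) ^ 2 ∂Q := by
    rw [hΔ, Real.sq_sqrt hD2nonneg]
  have hD2 : ∀ i ∈ G, (∫ x, (g i x)^2 ∂Q) ≤ Δ^2 := fun i hi =>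
    hΔsq ▸ Finset.le_sup' (fun i => ∫ x, (g i x) ^ 2 ∂Q) hi
  set V : ℝ := (∑ k, p k ^ 2) * Δ^2 with hVdef
  have hsump0 : 0 ≤ ∑ k, p k ^ 2 := Finset.sum_nonneg fun k _ => sq_nonneg _
  have hV0 : 0 ≤ V := mul_nonneg hsump0 (sq_nonneg _)
  have hμbd : ∀ i ∈ G, |μf i| ≤ Γ := by
    intro i hi
    rw [hμfdef]
    calc |∫ x, g i x ∂Q| ≤ ∫ x, |g i x| ∂Q := by
          simpa [Real.norm_eq_abs] using norm_integral_le_integral_norm (μ := Q) (g i)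
      _ ≤ ∫ x, Γ ∂Q := integral_mono_of_nonneg (ae_of_all _ fun x => abs_nonneg _)
          (integrable_const _) (ae_of_all _ fun x => hΓ i hi x)
      _ = Γ := by simp
  -- integrability of g and g²
  have hgint : ∀ i ∈ G, Integrable (g i) Q := fun i hi =>
    Integrable.mono' (integrable_const Γ) (hgmeas i hi).aestronglyMeasurable
      (ae_of_all _ fun x => by simpa using hΓ i hi x)
  have hg2int : ∀ i ∈ G, Integrable (fun x => (g i x)^2) Q := fun i hi =>
    Integrable.mono' (integrable_const (Γ^2)) (((hgmeas i hi).pow_const 2).aestronglyMeasurable)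
      (ae_of_all _ fun x => by
        rw [Real.norm_eq_abs, abs_pow]
        have := hΓ i hi x
        nlinarith [abs_nonneg (g i x)])
  -- per-term bound
  have hterm : ∀ i ∈ G, ∀ (s : ℝ), |s| * (2*M*Γ) ≤ 1 → ∀ (k : Fin (m+1)) (x : X),
      |s * (p k * (g i x - μf i))| ≤ 1 := by
    intro i hi s hs k x
    have h1 : |g i x - μf i| ≤ 2*Γ := by
      calc |g i x - μf i| ≤ |g i x| + |μf i| := abs_sub _ _
        _ ≤ Γ + Γ := add_le_add (hΓ i hi x) (hμbd i hi)
        _ = 2*Γ := by ring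
    calc |s * (p k * (g i x - μf i))| = |s| * (|p k| * |g i x - μf i|) := by
          rw [abs_mul, abs_mul]
      _ ≤ |s| * (M * (2*Γ)) := by
          apply mul_le_mul_of_nonneg_left _ (abs_nonneg s)
          exact mul_le_mul (hM k) h1 (abs_nonneg _) hM0
      _ = |s| * (2*M*Γ) := by ring
      _ ≤ 1 := hs
  -- S i measurable
  have hSmeas : ∀ i ∈ G, Measurable (S i) := by
    intro i hi
    rw [hSdef]
    exact Finset.measurable_sum _ fun k _ =>
      (((hgmeas i hi).comp (hYmeas k)).sub measurable_const).const_mul _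
  have hmgf : ∀ i ∈ G, ∀ (s : ℝ), |s| * (2*M*Γ) ≤ 1 →
      (∫ ω, Real.exp (s * S i ω) ∂P) ≤ Real.exp ((3/4) * s^2 * V) := by
    intro i hi s hs
    set φ : Fin (m+1) → X → ℝ := fun k x => p k * (g i x - μf i) with hφdef
    have hφmeas : ∀ k, Measurable (φ k) := fun k =>
      ((hgmeas i hi).sub measurable_const).const_mul _
    have hZindep : iIndepFun (fun k => φ k ∘ Y k) P :=
      hYindep.comp φ hφmeas
    have hZmeas : ∀ k, Measurable (φ k ∘ Y k) := fun k => (hφmeas k).comp (hYmeas k)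
    have hSsum : S i = ∑ k, φ k ∘ Y k := by
      funext ω; simp [hSdef, hφdef, Finset.sum_apply]
    have hmgfS : (∫ ω, Real.exp (s * S i ω) ∂P) = mgf (S i) P s := rfl
    rw [hmgfS, hSsum, hZindep.mgf_sum hZmeas]
    have hone : ∀ k : Fin (m+1), mgf (φ k ∘ Y k) P s ≤ Real.exp ((3/4) * s^2 * (p k^2 * Δ^2)) := by
      intro k
      have hmap : mgf (φ k ∘ Y k) P s = ∫ x, Real.exp (s * φ k x) ∂Q := by
        rw [mgf, ← hYlaw k, integral_map (hYmeas k).aemeasurable]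
        · rfl
        · exact (((hφmeas k).const_mul s).exp).aestronglyMeasurable
      rw [hmap]
      have hmean : ∫ x, s * φ k x ∂Q = 0 := by
        simp only [hφdef]
        rw [integral_const_mul, integral_const_mul,
          integral_sub (hgint i hi) (integrable_const _), integral_const]
        simp [hμfdef]
      have hbd : ∀ x, |s * φ k x| ≤ 1 := fun x => hterm i hi s hs k x
      have hkey := integral_exp_le Q (fun x => s * φ k x) ((hφmeas k).const_mul s) hbd hmean
      refine hkey.trans (Real.exp_le_exp.mpr ?_)
      have hsq : ∫ x, (s * φ k x)^2 ∂Q ≤ s^2 * (p k^2 * Δ^2) := by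
        have e1 : ∀ x, (s * φ k x)^2 = (s^2 * p k^2) * (g i x - μf i)^2 := by
          intro x; simp only [hφdef]; ring
        calc ∫ x, (s * φ k x)^2 ∂Q = (s^2 * p k^2) * ∫ x, (g i x - μf i)^2 ∂Q := by
              simp_rw [e1]; rw [integral_const_mul]
          _ ≤ (s^2 * p k^2) * Δ^2 := by
              refine mul_le_mul_of_nonneg_left ?_ (by positivity)
              have ecent : ∫ x, (g i x - μf i)^2 ∂Q
                  = (∫ x, (g i x)^2 ∂Q) - (μf i)^2 := by
                have e2 : ∀ x, (g i x - μf i)^2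
                    = (g i x)^2 - (2 * μf i) * (g i x) + (μf i)^2 := fun x => by ring
                calc ∫ x, (g i x - μf i)^2 ∂Q
                    = ∫ x, ((g i x)^2 - (2 * μf i) * (g i x) + (μf i)^2) ∂Q := by
                      simp_rw [e2]
                  _ = ((∫ x, (g i x)^2 ∂Q) - (2*μf i) * ∫ x, g i x ∂Q) + (μf i)^2 := by
                      have ha : Integrable (fun x => g i x ^ 2 - 2 * μf i * g i x) Q :=
                        (hg2int i hi).sub ((hgint i hi).const_mul _)
                      have e3 : ∫ x, (g i x ^ 2 - 2 * μf i * g i x + μf i ^ 2) ∂Q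
                          = (∫ x, (g i x ^ 2 - 2 * μf i * g i x) ∂Q) + ∫ x, (μf i ^ 2) ∂Q :=
                        integral_add ha (integrable_const _)
                      have e4 : ∫ x, (g i x ^ 2 - 2 * μf i * g i x) ∂Q
                          = (∫ x, g i x ^ 2 ∂Q) - ∫ x, 2 * μf i * g i x ∂Q :=
                        integral_sub (hg2int i hi) ((hgint i hi).const_mul _)
                      rw [e3, e4, integral_const_mul, integral_const]
                      simp
                  _ = (∫ x, (g i x)^2 ∂Q) - (μf i)^2 := by
                      simp only [hμfdef]; ring
              rw [ecent]
              nlinarith [hD2 i hi, sq_nonneg (μf i)]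
          _ = s^2 * (p k^2 * Δ^2) := by ring
      linarith
    calc ∏ k, mgf (φ k ∘ Y k) P s ≤ ∏ k, Real.exp ((3/4) * s^2 * (p k^2 * Δ^2)) :=
        Finset.prod_le_prod (fun k _ => mgf_nonneg) (fun k _ => hone k)
      _ = Real.exp (∑ k, (3/4) * s^2 * (p k^2 * Δ^2)) := (Real.exp_sum _ _).symm
      _ = Real.exp ((3/4) * s^2 * V) := by
        rw [hVdef]
        congr 1
        calc ∑ k, (3:ℝ)/4 * s^2 * (p k^2 * Δ^2)
            = ∑ k, (p k^2) * ((3/4) * s^2 * Δ^2) :=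
              Finset.sum_congr rfl fun k _ => by ring
          _ = (∑ k, p k^2) * ((3/4)*s^2*Δ^2) := (Finset.sum_mul _ _ _).symm
          _ = 3/4*s^2*((∑ k, p k^2)*Δ^2) := by ring
  -- boundedness of t * S i
  have hSbd : ∀ i ∈ G, ∀ (s : ℝ), |s| * (2*M*Γ) ≤ 1 → ∀ ω, |s * S i ω| ≤ (m+1 : ℝ) := by
    intro i hi s hs ω
    have e : s * S i ω = ∑ k, s * (p k * (g i (Y k ω) - μf i)) := by
      simp only [hSdef]; rw [Finset.mul_sum]
    rw [e]
    calc |∑ k, s * (p k * (g i (Y k ω) - μf i))|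
        ≤ ∑ k, |s * (p k * (g i (Y k ω) - μf i))| := Finset.abs_sum_le_sum_abs _ _
      _ ≤ ∑ _k : Fin (m+1), (1:ℝ) := Finset.sum_le_sum fun k _ => hterm i hi s hs k _
      _ = (m+1 : ℝ) := by simp
  have hIexp : ∀ i ∈ G, ∀ (s : ℝ), |s| * (2*M*Γ) ≤ 1 →
      Integrable (fun ω => Real.exp (s * S i ω)) P := by
    intro i hi s hs
    refine Integrable.mono' (integrable_const (Real.exp (m+1)))
      (((hSmeas i hi).const_mul s).exp).aestronglyMeasurable (ae_of_all _ fun ω => ?_)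
    rw [Real.norm_eq_abs, abs_of_pos (Real.exp_pos _)]
    exact Real.exp_le_exp.mpr ((le_abs_self _).trans (hSbd i hi s hs ω))
  -- key estimate
  have key : ∀ t : ℝ, 0 < t → t * (2*M*Γ) ≤ 1 →
      (∫ ω, G.sup' hG (fun i => |S i ω|) ∂P)
        ≤ (Real.log (2*G.card) + 1) / t + (3/4) * t * V := by
    intro t ht ht1
    have htne : t ≠ 0 := ne_of_gt ht
    have habs : |t| * (2*M*Γ) ≤ 1 := by rwa [abs_of_pos ht]
    have habs' : |(-t)| * (2*M*Γ) ≤ 1 := by rwa [abs_neg, abs_of_pos ht]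
    set s₀ : ℝ := (Real.log (2*G.card) + (3/4)*t^2*V)/t with hs₀def
    have hptw : ∀ ω, G.sup' hG (fun i => |S i ω|)
        ≤ s₀ + (Real.exp (-(t*s₀))/t)
            * ∑ i ∈ G, (Real.exp (t * S i ω) + Real.exp (-(t * S i ω))) := by
      intro ω
      obtain ⟨i₁, hi₁, hsup⟩ := Finset.exists_mem_eq_sup' hG (fun i => |S i ω|)
      have h3 : Real.exp (t * G.sup' hG (fun i => |S i ω|))
          ≤ ∑ i ∈ G, (Real.exp (t * S i ω) + Real.exp (-(t * S i ω))) := by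
        have h4 : Real.exp (t * G.sup' hG (fun i => |S i ω|))
            ≤ Real.exp (t * S i₁ ω) + Real.exp (-(t * S i₁ ω)) := by
          rw [hsup]
          rcases abs_cases (S i₁ ω) with ⟨hc, _⟩ | ⟨hc, _⟩
          · rw [hc]; exact le_add_of_nonneg_right (Real.exp_pos _).le
          · rw [hc, mul_neg]; exact le_add_of_nonneg_left (Real.exp_pos _).le
        refine h4.trans (Finset.single_le_sum (f := fun i => Real.exp (t * S i ω) + Real.exp (-(t * S i ω))) (fun i _ => by positivity) hi₁)
      have h1 : t * (G.sup' hG (fun i => |S i ω|) - s₀)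
          ≤ Real.exp (t * (G.sup' hG (fun i => |S i ω|) - s₀)) := by
        linarith [Real.add_one_le_exp (t * (G.sup' hG (fun i => |S i ω|) - s₀))]
      have h2 : Real.exp (t * (G.sup' hG (fun i => |S i ω|) - s₀))
          = Real.exp (-(t*s₀)) * Real.exp (t * G.sup' hG (fun i => |S i ω|)) := by
        rw [← Real.exp_add]; ring_nf
      have h5 : Real.exp (-(t*s₀)) * Real.exp (t * G.sup' hG (fun i => |S i ω|))
          ≤ Real.exp (-(t*s₀)) * ∑ i ∈ G, (Real.exp (t * S i ω) + Real.exp (-(t * S i ω))) :=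
        mul_le_mul_of_nonneg_left h3 (Real.exp_pos _).le
      have h6 : t * (G.sup' hG (fun i => |S i ω|) - s₀)
          ≤ Real.exp (-(t*s₀)) * ∑ i ∈ G, (Real.exp (t * S i ω) + Real.exp (-(t * S i ω))) := by
        rw [h2] at h1; linarith
      have h7 : G.sup' hG (fun i => |S i ω|) - s₀
          ≤ (Real.exp (-(t*s₀)) * ∑ i ∈ G, (Real.exp (t * S i ω) + Real.exp (-(t * S i ω)))) / t := by
        rw [le_div_iff₀ ht]; linarith
      have h8 : (Real.exp (-(t*s₀)) * ∑ i ∈ G, (Real.exp (t * S i ω) + Real.exp (-(t * S i ω)))) / t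
          = (Real.exp (-(t*s₀))/t) * ∑ i ∈ G, (Real.exp (t * S i ω) + Real.exp (-(t * S i ω))) := by
        ring
      linarith [h8 ▸ h7]
    have hint2 : ∀ i ∈ G, Integrable (fun ω => Real.exp (t * S i ω) + Real.exp (-(t * S i ω))) P :=
      fun i hi => (hIexp i hi t habs).add (by simpa [neg_mul] using hIexp i hi (-t) habs')
    have hexpsInt : Integrable (fun ω => ∑ i ∈ G, (Real.exp (t * S i ω) + Real.exp (-(t * S i ω)))) P :=
      integrable_finset_sum _ hint2
    have hFint : Integrable (fun ω => s₀ + (Real.exp (-(t*s₀))/t)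
        * ∑ i ∈ G, (Real.exp (t * S i ω) + Real.exp (-(t * S i ω)))) P :=
      (integrable_const _).add (hexpsInt.const_mul _)
    have hmono := integral_mono_of_nonneg
      (ae_of_all _ fun ω => le_trans (abs_nonneg (S i₀ ω)) (Finset.le_sup' (fun i => |S i ω|) hi₀))
      hFint (ae_of_all _ hptw)
    have hcalc : ∫ ω, (s₀ + (Real.exp (-(t*s₀))/t)
          * ∑ i ∈ G, (Real.exp (t * S i ω) + Real.exp (-(t * S i ω)))) ∂P
        = s₀ + (Real.exp (-(t*s₀))/t)
          * ∑ i ∈ G, ((∫ ω, Real.exp (t * S i ω) ∂P) + ∫ ω, Real.exp (-(t * S i ω)) ∂P) := by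
      rw [integral_add (integrable_const _) (hexpsInt.const_mul _), integral_const,
        integral_const_mul, integral_finset_sum _ hint2]
      simp only [measure_univ, probReal_univ, ENNReal.toReal_one, smul_eq_mul, one_mul]
      congr 1
      refine congrArg _ (Finset.sum_congr rfl fun i hi => ?_)
      exact integral_add (hIexp i hi t habs) (by simpa [neg_mul] using hIexp i hi (-t) habs')
    have hsumbd : ∑ i ∈ G, ((∫ ω, Real.exp (t * S i ω) ∂P) + ∫ ω, Real.exp (-(t * S i ω)) ∂P)
        ≤ (G.card : ℝ) * (2 * Real.exp ((3/4)*t^2*V)) := by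
      calc ∑ i ∈ G, ((∫ ω, Real.exp (t * S i ω) ∂P) + ∫ ω, Real.exp (-(t * S i ω)) ∂P)
          ≤ ∑ _i ∈ G, (2 * Real.exp ((3/4)*t^2*V)) := by
            refine Finset.sum_le_sum fun i hi => ?_
            have b1 := hmgf i hi t habs
            have b2 := hmgf i hi (-t) habs'
            rw [neg_sq] at b2
            have e : (∫ ω, Real.exp (-(t * S i ω)) ∂P) = ∫ ω, Real.exp ((-t) * S i ω) ∂P := by
              simp [neg_mul]
            rw [e]; linarith
        _ = (G.card : ℝ) * (2 * Real.exp ((3/4)*t^2*V)) := by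
            rw [Finset.sum_const, nsmul_eq_mul]
    have hts₀ : t * s₀ = Real.log (2*G.card) + (3/4)*t^2*V := by
      rw [hs₀def]; field_simp
    have h2n : (0:ℝ) < 2*G.card := by linarith
    have hmul : Real.exp (-(t*s₀)) * ((G.card:ℝ) * (2 * Real.exp ((3/4)*t^2*V))) = 1 := by
      rw [hts₀, show ((G.card:ℝ) * (2 * Real.exp ((3/4)*t^2*V)))
          = Real.exp (Real.log (2*G.card) + (3/4)*t^2*V) by
        rw [Real.exp_add, Real.exp_log h2n]; ring]
      rw [← Real.exp_add,
        show -(Real.log (2*(G.card:ℝ)) + 3/4*t^2*V) + (Real.log (2*(G.card:ℝ)) + 3/4*t^2*V)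
          = 0 by ring, Real.exp_zero]
    have hpos0 : (0:ℝ) ≤ Real.exp (-(t*s₀))/t := by positivity
    have hfinal : s₀ + (Real.exp (-(t*s₀))/t)
          * ∑ i ∈ G, ((∫ ω, Real.exp (t * S i ω) ∂P) + ∫ ω, Real.exp (-(t * S i ω)) ∂P)
        ≤ s₀ + 1/t := by
      have := mul_le_mul_of_nonneg_left hsumbd hpos0
      have e : (Real.exp (-(t*s₀))/t) * ((G.card:ℝ) * (2 * Real.exp ((3/4)*t^2*V))) = 1/t := by
        rw [div_mul_eq_mul_div, hmul]
      linarith [e ▸ this]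
    have hfin2 : s₀ + 1/t = (Real.log (2*G.card) + 1) / t + (3/4) * t * V := by
      rw [hs₀def]; field_simp; ring
    rw [hcalc] at hmono
    linarith
  -- numeric: log(2n) + 1 ≤ (7/2) L
  have hnpos : (0:ℝ) < G.card := by linarith
  have hlog2n : Real.log (2*G.card) + 1 ≤ (7/2)*L := by
    have e1 : Real.log (2*(G.card:ℝ)) = Real.log 2 + Real.log G.card :=
      Real.log_mul two_ne_zero (ne_of_gt hnpos)
    have e2 : Real.log (G.card:ℝ) ≤ L := by
      rw [hLdef]; exact Real.log_le_log hnpos (by linarith)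
    have e3 : (0.6931471803:ℝ) < Real.log 2 := Real.log_two_gt_d9
    rw [e1]
    linarith [hL2, e2, e3]
  have hfirst0 : (0:ℝ) ≤ Real.sqrt (∑ k, p k ^ 2) * Δ * Real.sqrt L :=
    mul_nonneg (mul_nonneg (Real.sqrt_nonneg _) hΔ0) (Real.sqrt_nonneg _)
  rcases (eq_or_lt_of_le (mul_nonneg hM0 hΓ0)).imp Eq.symm id with hMΓ | hMΓ
  · -- degenerate: M*Γ = 0, LHS = 0
    have hzero : ∀ ω, G.sup' hG (fun i => |S i ω|) = 0 := by
      intro ω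
      refine le_antisymm (Finset.sup'_le _ _ fun i hi => ?_)
        (le_trans (abs_nonneg (S i₀ ω)) (Finset.le_sup' (fun i => |S i ω|) hi₀))
      have hterm0 : ∀ k : Fin (m+1), p k * (g i (Y k ω) - μf i) = 0 := by
        intro k
        rcases mul_eq_zero.mp hMΓ with hM' | hΓ'
        · have hp : p k = 0 := by
            have h := hM k
            rw [hM'] at h
            exact abs_eq_zero.mp (le_antisymm h (abs_nonneg _))
          rw [hp, zero_mul]
        · have hg0 : ∀ x, g i x = 0 := by
            intro x
            have h := hΓ i hi x
            rw [hΓ'] at h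
            exact abs_eq_zero.mp (le_antisymm h (abs_nonneg _))
          have hμ0 : μf i = 0 := by simp only [hμfdef]; simp [hg0]
          rw [hg0, hμ0, sub_zero, mul_zero]
      have : S i ω = 0 := by
        simp only [hSdef]
        exact Finset.sum_eq_zero fun k _ => hterm0 k
      rw [this, abs_zero]
    have hz : ∫ ω, G.sup' hG (fun i => |S i ω|) ∂P = 0 := by
      simp only [hzero, integral_const, smul_eq_mul, mul_zero]
    rw [hz]
    have hb : M*Γ*L = 0 := by rw [hMΓ, zero_mul]
    linarith
  · -- main case: 0 < M*Γ
    by_cases hcase : V ≤ (32/3) * L * (M*Γ)^2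
    · -- t = 1/(2*(M*Γ))
      have hne : (2*(M*Γ)) ≠ 0 := ne_of_gt (by linarith)
      have ht : (0:ℝ) < 1/(2*(M*Γ)) := one_div_pos.mpr (by linarith)
      have htle : (1/(2*(M*Γ))) * (2*M*Γ) ≤ 1 := le_of_eq (by
        calc (1/(2*(M*Γ))) * (2*M*Γ) = (2*(M*Γ))⁻¹ * (2*(M*Γ)) := by rw [one_div]; ring_nf
          _ = 1 := inv_mul_cancel₀ hne)
      have hkey := key (1/(2*(M*Γ))) ht htle
      have e1 : (Real.log (2*G.card)+1)/(1/(2*(M*Γ))) = (Real.log (2*G.card)+1)*(2*(M*Γ)) := by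
        rw [div_div_eq_mul_div, div_one]
      have e2 : (3/4)*(1/(2*(M*Γ)))*V ≤ 4*L*(M*Γ) := by
        have e3 : (3/4)*(1/(2*(M*Γ)))*V = (3*V)/(8*(M*Γ)) := by ring
        rw [e3, div_le_iff₀ (show (0:ℝ) < 8*(M*Γ) by linarith)]
        nlinarith [hcase, hLpos, hMΓ]
      have e4 : (Real.log (2*G.card)+1)*(2*(M*Γ)) ≤ (7/2)*L*(2*(M*Γ)) := by
        apply mul_le_mul_of_nonneg_right hlog2n (by linarith)
      rw [e1] at hkey
      have : (∫ ω, G.sup' hG (fun i => |S i ω|) ∂P) ≤ 11*(L*(M*Γ)) := by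
        linarith [hkey, e2, e4]
      refine this.trans ?_
      nlinarith [mul_pos hLpos hMΓ, hfirst0]
    · -- t = sqrt(8L/(3V))
      push_neg at hcase
      have hVpos : 0 < V :=
        lt_trans (by nlinarith [mul_pos hLpos (mul_pos hMΓ hMΓ)]) hcase
      set t : ℝ := Real.sqrt (8*L/(3*V)) with htdef
      have harg : 0 < 8*L/(3*V) := div_pos (by linarith) (by linarith)
      have ht : 0 < t := Real.sqrt_pos.mpr harg
      have htne : t ≠ 0 := ne_of_gt ht
      have ht2 : t^2 = 8*L/(3*V) := Real.sq_sqrt harg.le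
      have ht3 : t^2 * (3*V) = 8*L := by
        rw [ht2]; exact div_mul_cancel₀ _ (ne_of_gt (by linarith : (0:ℝ) < 3*V))
      have htM : 0 ≤ t*(2*M*Γ) := mul_nonneg ht.le (by linarith)
      have h1 : (t*(2*M*Γ))^2 * (3*V) = 32*L*(M*Γ)^2 := by
        linear_combination (4*(M*Γ)^2) * ht3
      have h2 : (t*(2*M*Γ))^2 < 1 := by nlinarith [h1, hcase, hVpos]
      have htle : t*(2*M*Γ) ≤ 1 := by nlinarith [h2, htM]
      have hkey := key t ht htle
      have e5 : (3/4)*t*V = 2*(L/t) := by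
        rw [show 2*(L/t) = (2*L)/t by ring, eq_div_iff htne]
        linear_combination (1/4)*ht3
      have e6 : (Real.log (2*G.card)+1)/t ≤ ((7/2)*L)/t :=
        (div_le_div_iff_of_pos_right ht).mpr hlog2n
      have e7 : L/t = Real.sqrt ((3/8)*(L*V)) := by
        have h8 : ((3:ℝ)/8)*(L*V) = (L/t)^2 := by
          rw [div_pow, eq_div_iff (pow_ne_zero 2 htne)]
          linear_combination (L/8)*ht3
        rw [h8, Real.sqrt_sq (div_nonneg hLpos.le ht.le)]
      have e8 : Real.sqrt ((3/8)*(L*V)) ≤ Real.sqrt (L*V) :=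
        Real.sqrt_le_sqrt (by linarith [mul_nonneg hLpos.le hV0])
      have e9 : Real.sqrt (L*V) = Real.sqrt (∑ k, p k ^ 2) * Δ * Real.sqrt L := by
        rw [hVdef, Real.sqrt_mul hLpos.le, Real.sqrt_mul hsump0, Real.sqrt_sq hΔ0]
        ring
      have e10 : L/t ≤ Real.sqrt (∑ k, p k ^ 2) * Δ * Real.sqrt L := by
        rw [e7, ← e9]; exact e8
      have e11 : ((7/2)*L)/t = (7/2)*(L/t) := by ring
      have : (∫ ω, G.sup' hG (fun i => |S i ω|) ∂P)
          ≤ (11/2) * (Real.sqrt (∑ k, p k ^ 2) * Δ * Real.sqrt L) := by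
        rw [e11] at e6
        linarith [hkey, e5, e6, e10]
      refine this.trans ?_
      have hMΓL : 0 ≤ M*Γ*L := by nlinarith [mul_pos hMΓ hLpos]
      linarith
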